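/- There exists an affine map F : ℝ^6 →ᵃ[ℝ] ℝ² such that F (m i) = s i for every i ∈ Fin 6 (the partial refining map from the simplex to the hexagon exists on the polytope spanned by the edge midpoints). -/

import Mathlib

noncomputable section

/-- The standard basis vectors of `ℝ^6`. -/
def e (i : Fin 6) : Fin 6 → ℝ := fun j => if j = i then 1 else 0

/-- The edge midpoints `m i = (e i + e (i+1)) / 2` (cyclic indices). -/
def m (i : Fin 6) : Fin 6 → ℝ := (1 / 2 : ℝ) • (e i + e (i + 1))

/-- The standard 5-simplex. -/
def Δ : Set (Fin 6 → ℝ) := convexHull ℝ {e 0, e 1, e 2, e 3, e 4, e 5}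

/-- The polytope spanned by the edge midpoints. -/
def D : Set (Fin 6 → ℝ) := convexHull ℝ {m 0, m 1, m 2, m 3, m 4, m 5}

/-- The vertices of a regular hexagon in `ℝ²`. -/
def s (j : Fin 6) : ℝ × ℝ :=
  (Real.cos (((j : ℕ) + 1 : ℝ) * Real.pi / 3), Real.sin (((j : ℕ) + 1 : ℝ) * Real.pi / 3))

/-- The hexagon. -/
def C : Set (ℝ × ℝ) := convexHull ℝ {s 0, s 1, s 2, s 3, s 4, s 5}

/-- Images of the basis vectors: a scaled, rotated hexagon whose edge midpoints are `s`. -/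
def vvec : Fin 6 → ℝ × ℝ
  | 0 => (1, (Real.sqrt 3)⁻¹)
  | 1 => (0, 2 * (Real.sqrt 3)⁻¹)
  | 2 => (-1, (Real.sqrt 3)⁻¹)
  | 3 => (-1, -(Real.sqrt 3)⁻¹)
  | 4 => (0, -(2 * (Real.sqrt 3)⁻¹))
  | 5 => (1, -(Real.sqrt 3)⁻¹)

def Lmap : ((Fin 6 → ℝ) →ₗ[ℝ] ℝ × ℝ) :=
  ∑ i : Fin 6, LinearMap.smulRight (LinearMap.proj (R := ℝ) (φ := fun _ : Fin 6 => ℝ) i) (vvec i)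

lemma sqrt3_pos : (0:ℝ) < Real.sqrt 3 := Real.sqrt_pos.mpr (by norm_num)

lemma sqrt3_sq : Real.sqrt 3 * Real.sqrt 3 = 3 := Real.mul_self_sqrt (by norm_num)

/-- There exists an affine map `F : ℝ^6 →ᵃ[ℝ] ℝ²` sending each edge midpoint `m i`
to the hexagon vertex `s i`. -/
lemma Lmap_e : ∀ k : Fin 6, Lmap (e k) = vvec k := by
  intro k
  fin_cases k <;>
  · simp (config := { decide := true }) [Lmap, LinearMap.coe_sum, Finset.sum_apply,
      LinearMap.smulRight_apply, LinearMap.proj_apply, Fin.sum_univ_six, e]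

lemma Lmap_m (i : Fin 6) : Lmap (m i) = (1 / 2 : ℝ) • (vvec i + vvec (i + 1)) := by
  rw [m, map_smul, map_add, Lmap_e, Lmap_e]

lemma cos_two_pi_div_three : Real.cos (2 * Real.pi / 3) = -(1 / 2) := by
  rw [show 2 * Real.pi / 3 = Real.pi - Real.pi / 3 by ring, Real.cos_pi_sub,
    Real.cos_pi_div_three]

lemma sin_two_pi_div_three : Real.sin (2 * Real.pi / 3) = Real.sqrt 3 / 2 := by
  rw [show 2 * Real.pi / 3 = Real.pi - Real.pi / 3 by ring, Real.sin_pi_sub,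
    Real.sin_pi_div_three]

lemma cos_four_pi_div_three : Real.cos (4 * Real.pi / 3) = -(1 / 2) := by
  rw [show 4 * Real.pi / 3 = Real.pi + Real.pi / 3 by ring, Real.cos_add, Real.cos_pi,
    Real.sin_pi, Real.cos_pi_div_three]
  ring

lemma sin_four_pi_div_three : Real.sin (4 * Real.pi / 3) = -(Real.sqrt 3 / 2) := by
  rw [show 4 * Real.pi / 3 = Real.pi + Real.pi / 3 by ring, Real.sin_add, Real.cos_pi,
    Real.sin_pi, Real.sin_pi_div_three]
  ring

lemma cos_five_pi_div_three : Real.cos (5 * Real.pi / 3) = 1 / 2 := by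
  rw [show 5 * Real.pi / 3 = 2 * Real.pi - Real.pi / 3 by ring, Real.cos_sub, Real.cos_two_pi,
    Real.sin_two_pi, Real.cos_pi_div_three]
  ring

lemma sin_five_pi_div_three : Real.sin (5 * Real.pi / 3) = -(Real.sqrt 3 / 2) := by
  rw [show 5 * Real.pi / 3 = 2 * Real.pi - Real.pi / 3 by ring, Real.sin_sub, Real.cos_two_pi,
    Real.sin_two_pi, Real.sin_pi_div_three]
  ring

lemma s_val :
    s 0 = (1 / 2, Real.sqrt 3 / 2) ∧ s 1 = (-(1 / 2), Real.sqrt 3 / 2) ∧ s 2 = (-1, 0) ∧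
    s 3 = (-(1 / 2), -(Real.sqrt 3 / 2)) ∧ s 4 = (1 / 2, -(Real.sqrt 3 / 2)) ∧ s 5 = (1, 0) := by
  refine ⟨?_, ?_, ?_, ?_, ?_, ?_⟩ <;> rw [s, Prod.ext_iff]
  · rw [show ((((0:Fin 6):ℕ):ℝ) + 1) * Real.pi / 3 = Real.pi / 3 from by
      rw [show ((0:Fin 6):ℕ) = 0 from rfl]; push_cast; ring]
    exact ⟨Real.cos_pi_div_three, Real.sin_pi_div_three⟩
  · rw [show ((((1:Fin 6):ℕ):ℝ) + 1) * Real.pi / 3 = 2 * Real.pi / 3 from by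
      rw [show ((1:Fin 6):ℕ) = 1 from rfl]; push_cast; ring]
    exact ⟨cos_two_pi_div_three, sin_two_pi_div_three⟩
  · rw [show ((((2:Fin 6):ℕ):ℝ) + 1) * Real.pi / 3 = Real.pi from by
      rw [show ((2:Fin 6):ℕ) = 2 from rfl]; push_cast; ring]
    exact ⟨Real.cos_pi, Real.sin_pi⟩
  · rw [show ((((3:Fin 6):ℕ):ℝ) + 1) * Real.pi / 3 = 4 * Real.pi / 3 from by
      rw [show ((3:Fin 6):ℕ) = 3 from rfl]; push_cast; ring]
    exact ⟨cos_four_pi_div_three, sin_four_pi_div_three⟩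
  · rw [show ((((4:Fin 6):ℕ):ℝ) + 1) * Real.pi / 3 = 5 * Real.pi / 3 from by
      rw [show ((4:Fin 6):ℕ) = 4 from rfl]; push_cast; ring]
    exact ⟨cos_five_pi_div_three, sin_five_pi_div_three⟩
  · rw [show ((((5:Fin 6):ℕ):ℝ) + 1) * Real.pi / 3 = 2 * Real.pi from by
      rw [show ((5:Fin 6):ℕ) = 5 from rfl]; push_cast; ring]
    exact ⟨Real.cos_two_pi, Real.sin_two_pi⟩

theorem exists_refining_affine_map :
    ∃ F : (Fin 6 → ℝ) →ᵃ[ℝ] ℝ × ℝ, ∀ i : Fin 6, F (m i) = s i := by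
  obtain ⟨h0, h1, h2, h3', h4, h5⟩ := s_val
  have h3 := sqrt3_sq
  have hp := sqrt3_pos.ne'
  refine ⟨LinearMap.toAffineMap Lmap, fun i => ?_⟩
  rw [LinearMap.coe_toAffineMap, Lmap_m]
  fin_cases i
  · show (1 / 2 : ℝ) • (vvec 0 + vvec 1) = s 0
    rw [h0]; norm_num [vvec, Prod.ext_iff]; field_simp; nlinarith [sqrt3_sq]
  · show (1 / 2 : ℝ) • (vvec 1 + vvec 2) = s 1
    rw [h1]; norm_num [vvec, Prod.ext_iff]; field_simp; nlinarith [sqrt3_sq]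
  · show (1 / 2 : ℝ) • (vvec 2 + vvec 3) = s 2
    rw [h2]; norm_num [vvec, Prod.ext_iff]
  · show (1 / 2 : ℝ) • (vvec 3 + vvec 4) = s 3
    rw [h3']; norm_num [vvec, Prod.ext_iff]; field_simp; nlinarith [sqrt3_sq]
  · show (1 / 2 : ℝ) • (vvec 4 + vvec 5) = s 4
    rw [h4]; norm_num [vvec, Prod.ext_iff]; field_simp; nlinarith [sqrt3_sq]
  · show (1 / 2 : ℝ) • (vvec 5 + vvec 0) = s 5
    rw [h5]; norm_num [vvec, Prod.ext_iff]
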